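/- Every simplicial group is a Kan complex; that is, for a functor G : Δ^op → Grp, the underlying simplicial set of G admits fillers for all horns Λ^p_i ↪ Δ^p with p ≥ 1 and 0 ≤ i ≤ p. -/

import Mathlib

open CategoryTheory Simplicial

universe u

/-- The old Mathlib (Dec 2024) class `SSet.KanComplex`: horn filling for every `n : ℕ`
(including `n = 0`) and every `i : Fin (n + 1)`. -/
class SSet.KanComplexOld (S : SSet.{u}) : Prop where
  hornFilling : ∀ ⦃n : ℕ⦄ ⦃i : Fin (n+1)⦄ (σ₀ : (Λ[n, i] : SSet) ⟶ S),
    ∃ σ : Δ[n] ⟶ S, σ₀ = Λ[n, i].ι ≫ σ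

namespace MoorePf

open Opposite

variable (G : SimplicialObject GrpCat.{0})

noncomputable abbrev XX : SSet := (G ⋙ forget GrpCat : SimplexCategoryᵒᵖ ⥤ Type)

instance (m : SimplexCategoryᵒᵖ) : Group ((XX G).obj m) := inferInstanceAs (Group (G.obj m))

variable {G}

lemma map_mul' {m m' : SimplexCategoryᵒᵖ} (f : m ⟶ m') (a b : (XX G).obj m) :
    (XX G).map f (a * b) = (XX G).map f a * (XX G).map f b :=
  MonoidHom.map_mul (G.map f).hom a b

lemma map_inv' {m m' : SimplexCategoryᵒᵖ} (f : m ⟶ m') (a : (XX G).obj m) :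
    (XX G).map f a⁻¹ = ((XX G).map f a)⁻¹ :=
  MonoidHom.map_inv (G.map f).hom a

lemma map_one' {m m' : SimplexCategoryᵒᵖ} (f : m ⟶ m') :
    (XX G).map f (1 : (XX G).obj m) = 1 := MonoidHom.map_one (G.map f).hom

lemma δ_mul {n} (j : Fin (n+2)) (a b : (XX G) _⦋n+1⦌) :
    (XX G).δ j (a * b) = (XX G).δ j a * (XX G).δ j b := map_mul' _ a b
lemma δ_inv {n} (j : Fin (n+2)) (a : (XX G) _⦋n+1⦌) :
    (XX G).δ j a⁻¹ = ((XX G).δ j a)⁻¹ := map_inv' _ a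
lemma σ_one {n} (j : Fin (n+1)) : (XX G).σ j (1 : (XX G) _⦋n⦌) = 1 := map_one' _

lemma dd {n} {a b : ℕ} (hab : a ≤ b) (hb : b < n + 2) (g : (XX G) _⦋n+2⦌) :
    (XX G).δ (⟨a, by omega⟩ : Fin (n+2)) ((XX G).δ (⟨b+1, by omega⟩ : Fin (n+3)) g) =
    (XX G).δ (⟨b, hb⟩ : Fin (n+2)) ((XX G).δ (⟨a, by omega⟩ : Fin (n+3)) g) := by
  have := types_congr_hom ((XX G).δ_comp_δ (i := ⟨a, by omega⟩) (j := ⟨b, hb⟩)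
    (by simpa [Fin.le_def] using hab)) g
  simpa [Fin.succ, Fin.castSucc, Fin.castAdd, Fin.castLE] using this

lemma dd' {n} {a b : ℕ} (hab : a < b) (hb : b < n + 3) (g : (XX G) _⦋n+2⦌) :
    (XX G).δ (⟨a, by omega⟩ : Fin (n+2)) ((XX G).δ (⟨b, by omega⟩ : Fin (n+3)) g) =
    (XX G).δ (⟨b-1, by omega⟩ : Fin (n+2)) ((XX G).δ (⟨a, by omega⟩ : Fin (n+3)) g) := by
  obtain ⟨c, rfl⟩ : ∃ c, b = c + 1 := ⟨b - 1, by omega⟩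
  simpa using dd (by omega : a ≤ c) (by omega) g

lemma ds_self {n} {a : ℕ} (ha : a < n + 2) (y : (XX G) _⦋n+1⦌) :
    (XX G).δ (⟨a, by omega⟩ : Fin (n+3)) ((XX G).σ (⟨a, ha⟩ : Fin (n+2)) y) = y := by
  have := types_congr_hom ((XX G).δ_comp_σ_self (i := (⟨a, ha⟩ : Fin (n+2)))) y
  simpa [Fin.castSucc, Fin.castAdd, Fin.castLE] using this

lemma ds_succ {n} {a : ℕ} (ha : a < n + 2) (y : (XX G) _⦋n+1⦌) :
    (XX G).δ (⟨a+1, by omega⟩ : Fin (n+3)) ((XX G).σ (⟨a, ha⟩ : Fin (n+2)) y) = y := by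
  have := types_congr_hom ((XX G).δ_comp_σ_succ (i := (⟨a, ha⟩ : Fin (n+2)))) y
  simpa [Fin.succ] using this

lemma ds_le {n} {a b : ℕ} (hab : a ≤ b) (hb : b < n + 1) (y : (XX G) _⦋n+1⦌) :
    (XX G).δ (⟨a, by omega⟩ : Fin (n+3)) ((XX G).σ (⟨b+1, by omega⟩ : Fin (n+2)) y) =
    (XX G).σ (⟨b, hb⟩ : Fin (n+1)) ((XX G).δ (⟨a, by omega⟩ : Fin (n+2)) y) := by
  have := types_congr_hom ((XX G).δ_comp_σ_of_le (i := (⟨a, by omega⟩ : Fin (n+2)))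
    (j := (⟨b, hb⟩ : Fin (n+1))) (by simpa [Fin.le_def] using hab)) y
  simpa [Fin.succ, Fin.castSucc, Fin.castAdd, Fin.castLE] using this

lemma ds_lt {n} {a b : ℕ} (hab : a < b) (hb : b < n + 2) (y : (XX G) _⦋n+1⦌) :
    (XX G).δ (⟨a, by omega⟩ : Fin (n+3)) ((XX G).σ (⟨b, by omega⟩ : Fin (n+2)) y) =
    (XX G).σ (⟨b-1, by omega⟩ : Fin (n+1)) ((XX G).δ (⟨a, by omega⟩ : Fin (n+2)) y) := by
  obtain ⟨c, rfl⟩ : ∃ c, b = c + 1 := ⟨b - 1, by omega⟩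
  simpa using ds_le (by omega : a ≤ c) (by omega) y

lemma ds_gt {n} {a b : ℕ} (hba : b < a) (ha : a < n + 2) (y : (XX G) _⦋n+1⦌) :
    (XX G).δ (⟨a+1, by omega⟩ : Fin (n+3)) ((XX G).σ (⟨b, by omega⟩ : Fin (n+2)) y) =
    (XX G).σ (⟨b, by omega⟩ : Fin (n+1)) ((XX G).δ (⟨a, by omega⟩ : Fin (n+2)) y) := by
  have := types_congr_hom ((XX G).δ_comp_σ_of_gt (i := (⟨a, ha⟩ : Fin (n+2)))
    (j := (⟨b, by omega⟩ : Fin (n+1))) (by simpa [Fin.lt_def] using hba)) y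
  simpa [Fin.succ, Fin.castSucc, Fin.castAdd, Fin.castLE] using this

lemma ds_gt' {n} {a b : ℕ} (hba : b + 1 < a) (ha : a < n + 3) (y : (XX G) _⦋n+1⦌) :
    (XX G).δ (⟨a, by omega⟩ : Fin (n+3)) ((XX G).σ (⟨b, by omega⟩ : Fin (n+2)) y) =
    (XX G).σ (⟨b, by omega⟩ : Fin (n+1)) ((XX G).δ (⟨a-1, by omega⟩ : Fin (n+2)) y) := by
  obtain ⟨c, rfl⟩ : ∃ c, a = c + 1 := ⟨a - 1, by omega⟩
  simpa using ds_gt (by omega : b < c) (by omega) y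


lemma ds_succ' {n} {a : ℕ} (h0 : 0 < a) (ha : a < n + 3) (y : (XX G) _⦋n+1⦌) :
    (XX G).δ (⟨a, by omega⟩ : Fin (n+3)) ((XX G).σ (⟨a-1, by omega⟩ : Fin (n+2)) y) = y := by
  obtain ⟨c, rfl⟩ : ∃ c, a = c + 1 := ⟨a - 1, by omega⟩
  simpa using ds_succ (by omega) y

lemma filler {n : ℕ} (i : Fin (n+3))
    (x : ∀ j : Fin (n+3), j ≠ i → (XX G) _⦋n+1⦌)
    (hx : ∀ (a b : ℕ) (hab : a < b) (hb : b < n+3)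
      (hai : (⟨a, by omega⟩ : Fin (n+3)) ≠ i) (hbi : (⟨b, hb⟩ : Fin (n+3)) ≠ i),
      (XX G).δ (⟨a, by omega⟩ : Fin (n+2)) (x ⟨b, hb⟩ hbi) =
      (XX G).δ (⟨b-1, by omega⟩ : Fin (n+2)) (x ⟨a, by omega⟩ hai)) :
    ∃ g : (XX G) _⦋n+2⦌, ∀ j (hj : j ≠ i), (XX G).δ j g = x j hj := by
  -- upward phase
  have up : ∀ r : ℕ, r ≤ i.val →
      ∃ w : (XX G) _⦋n+2⦌, ∀ j (hj : j ≠ i), j.val < r → (XX G).δ j w = x j hj := by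
    intro r
    induction r with
    | zero => exact fun _ => ⟨1, fun j hj h => absurd h (by omega)⟩
    | succ r ih =>
      intro hr
      obtain ⟨w, hw⟩ := ih (by omega)
      have hr2 : r < n + 2 := by have := i.isLt; omega
      have hRi : (⟨r, by omega⟩ : Fin (n+3)) ≠ i :=
        Fin.ne_of_val_ne (show r ≠ i.val by omega)
      set y : (XX G) _⦋n+1⦌ :=
        ((XX G).δ (⟨r, by omega⟩ : Fin (n+3)) w)⁻¹ * x ⟨r, by omega⟩ hRi with hy
      refine ⟨w * (XX G).σ (⟨r, by omega⟩ : Fin (n+2)) y, ?_⟩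
      rintro ⟨jv, hjv⟩ hj hlt
      simp only at hlt
      rw [δ_mul]
      rcases Nat.lt_succ_iff_lt_or_eq.mp hlt with h | h
      · -- jv < r
        have h1 : (XX G).δ (⟨jv, by omega⟩ : Fin (n+2)) y = 1 := by
          rw [hy, δ_mul, δ_inv, dd' h (by omega) w,
            hw ⟨jv, by omega⟩ hj (show jv < r by omega),
            hx jv r h (by omega) hj hRi]
          exact inv_mul_cancel _
        rw [ds_lt h (by omega) y, h1, σ_one, mul_one]
        exact hw ⟨jv, hjv⟩ hj (show jv < r by omega)
      · subst h
        rw [ds_self (by omega) y, hy, mul_inv_cancel_left]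
  -- downward phase
  have down : ∀ t r : ℕ, i.val < r → r + t = n + 3 →
      ∃ u : (XX G) _⦋n+2⦌, ∀ j (hj : j ≠ i),
        (j.val < i.val ∨ r ≤ j.val) → (XX G).δ j u = x j hj := by
    intro t
    induction t with
    | zero =>
      intro r hir hrt
      obtain ⟨w, hw⟩ := up i.val le_rfl
      exact ⟨w, fun j hj h => hw j hj (by
        rcases h with h | h
        exacts [h, absurd j.isLt (by omega)])⟩
    | succ t ih =>
      intro r hir hrt
      obtain ⟨u, hu⟩ := ih (r+1) (by omega) (by omega)
      have hr2 : r < n + 3 := by omega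
      have hr1 : 1 ≤ r := by omega
      have hRi : (⟨r, hr2⟩ : Fin (n+3)) ≠ i :=
        Fin.ne_of_val_ne (show r ≠ i.val by omega)
      set y : (XX G) _⦋n+1⦌ :=
        ((XX G).δ (⟨r, hr2⟩ : Fin (n+3)) u)⁻¹ * x ⟨r, hr2⟩ hRi with hy
      refine ⟨u * (XX G).σ (⟨r-1, by omega⟩ : Fin (n+2)) y, ?_⟩
      rintro ⟨jv, hjv⟩ hj hcase
      simp only at hcase
      rw [δ_mul]
      have hjcase : jv < i.val ∨ r + 1 ≤ jv ∨ jv = r := by omega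
      rcases hjcase with h | h | h
      · -- jv < i.val ≤ r - 1
        have hjr : jv < r - 1 := by omega
        have h1 : (XX G).δ (⟨jv, by omega⟩ : Fin (n+2)) y = 1 := by
          rw [hy, δ_mul, δ_inv, dd' (show jv < r by omega) (by omega) u,
            hu ⟨jv, by omega⟩ hj (Or.inl (show jv < i.val by omega)),
            hx jv r (by omega) (by omega) hj hRi]
          exact inv_mul_cancel _
        rw [ds_lt hjr (by omega) y, h1, σ_one, mul_one]
        exact hu ⟨jv, hjv⟩ hj (Or.inl (show jv < i.val by omega))
      · -- jv ≥ r + 1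
        have h1 : (XX G).δ (⟨jv-1, by omega⟩ : Fin (n+2)) y = 1 := by
          rw [hy, δ_mul, δ_inv, ← dd' (show r < jv by omega) (by omega) u,
            hu ⟨jv, by omega⟩ hj (Or.inr (show r + 1 ≤ jv by omega)),
            ← hx r jv (by omega) (by omega) hRi hj]
          exact inv_mul_cancel _
        rw [ds_gt' (show r - 1 + 1 < jv by omega) (by omega) y, h1, σ_one, mul_one]
        exact hu ⟨jv, hjv⟩ hj (Or.inr (show r + 1 ≤ jv by omega))
      · subst h
        rw [ds_succ' (show 0 < jv by omega) (by omega) y, hy, mul_inv_cancel_left]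
  obtain ⟨u, hu⟩ := down (n + 2 - i.val) (i.val + 1) (by omega) (by have := i.isLt; omega)
  exact ⟨u, fun j hj => hu j hj (by
    rcases lt_or_gt_of_ne (Fin.val_ne_of_ne hj) with h | h
    exacts [Or.inl h, Or.inr (by omega)])⟩

open SSet in
lemma horn_face_objEquiv {n : ℕ} (i j : Fin (n+2)) (hj : j ≠ i) :
    stdSimplex.objEquiv.{0} (horn.face.{0} i j hj).1 = SimplexCategory.δ j := rfl

open SSet in
lemma glue {n : ℕ} (i : Fin (n+2)) (σ₀ : (Λ[n+1, i] : SSet) ⟶ (XX G))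
    (g : (XX G) _⦋n+1⦌)
    (hg : ∀ j (hj : j ≠ i), (XX G).δ j g = σ₀.app (op ⦋n⦌) (horn.face i j hj)) :
    ∃ σ : Δ[n+1] ⟶ (XX G), σ₀ = Λ[n+1, i].ι ≫ σ := by
  refine ⟨SSet.yonedaEquiv.symm g, ?_⟩
  apply horn.hom_ext
  intro j hj
  rw [← hg j hj]
  show _ = (XX G).map ((stdSimplex.objEquiv.{0}) ((horn.face i j hj).1)).op g
  have : (stdSimplex.objEquiv.{0}) ((horn.face i j hj).1) = SimplexCategory.δ j := by
    exact horn_face_objEquiv i j hj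
  rw [this]
  rfl

open SSet in
lemma matching {n : ℕ} (i : Fin (n+3)) (σ₀ : (Λ[n+2, i] : SSet) ⟶ (XX G))
    (a b : ℕ) (hab : a < b) (hb : b < n+3)
    (hai : (⟨a, by omega⟩ : Fin (n+3)) ≠ i) (hbi : (⟨b, hb⟩ : Fin (n+3)) ≠ i) :
    (XX G).δ (⟨a, by omega⟩ : Fin (n+2)) (σ₀.app (op ⦋n+1⦌) (horn.face i ⟨b, hb⟩ hbi)) =
    (XX G).δ (⟨b-1, by omega⟩ : Fin (n+2)) (σ₀.app (op ⦋n+1⦌) (horn.face i ⟨a, by omega⟩ hai)) := by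
  have h1 := types_congr_hom (σ₀.naturality (SimplexCategory.δ (⟨a, by omega⟩ : Fin (n+2))).op)
    (horn.face i ⟨b, hb⟩ hbi)
  have h2 := types_congr_hom (σ₀.naturality (SimplexCategory.δ (⟨b-1, by omega⟩ : Fin (n+2))).op)
    (horn.face i ⟨a, by omega⟩ hai)
  simp only [types_comp_apply] at h1 h2
  show (XX G).map _ _ = (XX G).map _ _
  rw [← h1, ← h2]
  apply congrArg
  apply Subtype.ext
  show Δ[n+2].map (SimplexCategory.δ (⟨a, by omega⟩ : Fin (n+2))).op ((horn.face i ⟨b, hb⟩ hbi).1)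
    = Δ[n+2].map (SimplexCategory.δ (⟨b-1, by omega⟩ : Fin (n+2))).op ((horn.face i ⟨a, by omega⟩ hai).1)
  apply (SSet.stdSimplex.objEquiv.{0}).injective
  simp only [horn_face_objEquiv, SSet.stdSimplex.map_apply, Equiv.apply_symm_apply]
  show SimplexCategory.δ _ ≫ SimplexCategory.δ (⟨b, hb⟩ : Fin (n+3)) =
    SimplexCategory.δ _ ≫ SimplexCategory.δ (⟨a, by omega⟩ : Fin (n+3))
  have key := SimplexCategory.δ_comp_δ (i := (⟨a, by omega⟩ : Fin (n+2)))
    (j := (⟨b-1, by omega⟩ : Fin (n+2))) (by simp only [Fin.mk_le_mk]; omega)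
  convert key using 2
  congr 1
  rw [Fin.ext_iff]
  simp only [Fin.val_mk, Fin.val_succ, Fin.coe_castSucc]
  omega
  rfl

open SSet in
lemma filler_one (i : Fin 2) (σ₀ : (Λ[1, i] : SSet) ⟶ (XX G)) :
    ∃ g : (XX G) _⦋1⦌, ∀ j (hj : j ≠ i),
      (XX G).δ j g = σ₀.app (op ⦋0⦌) (horn.face i j hj) := by
  fin_cases i
  · refine ⟨(XX G).σ 0 (σ₀.app (op ⦋0⦌) (horn.face 0 1 (by decide))), ?_⟩
    intro j hj
    fin_cases j
    · exact absurd rfl hj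
    · have := types_congr_hom ((XX G).δ_comp_σ_succ (i := (0 : Fin 1)))
        (σ₀.app (op ⦋0⦌) (horn.face 0 1 (by decide)))
      simpa using this
  · refine ⟨(XX G).σ 0 (σ₀.app (op ⦋0⦌) (horn.face 1 0 (by decide))), ?_⟩
    intro j hj
    fin_cases j
    · have := types_congr_hom ((XX G).δ_comp_σ_self (i := (0 : Fin 1)))
        (σ₀.app (op ⦋0⦌) (horn.face 1 0 (by decide)))
      simpa using this
    · exact absurd rfl hj

end MoorePf

open SSet MoorePf Opposite

/-- Every simplicial group is a Kan complex (theorem of Moore): for a functor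
`G : Δᵒᵖ ⥤ Grp`, the underlying simplicial set of `G` admits fillers for all horns
`Λ[n, i] ↪ Δ[n]`. -/
theorem simplicialGroup_kanComplex (G : SimplicialObject GrpCat.{0}) :
    SSet.KanComplexOld (G ⋙ forget GrpCat : SimplexCategoryᵒᵖ ⥤ Type) := by
  constructor
  intro n i σ₀
  obtain _ | _ | m := n
  · refine ⟨SSet.yonedaEquiv.symm (1 : (XX G) _⦋0⦌), ?_⟩
    apply NatTrans.ext
    ext m α
    exact absurd (Set.eq_univ_of_forall fun k => Or.inr (by omega : k = i)) α.2
  · obtain ⟨g, hg⟩ := filler_one i σ₀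
    exact glue i σ₀ g hg
  · obtain ⟨g, hg⟩ := filler i (fun j hj => σ₀.app (op ⦋m+1⦌) (horn.face i j hj))
      (fun a b hab hb hai hbi => matching i σ₀ a b hab hb hai hbi)
    exact glue i σ₀ g hg
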